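/- For every x ∈ ℝ, ∫_{−∞}^{∞} F_β(x + u)·(sin(αu)/u)²·e^{−2iαu} du = (1/2)·e^{iβ}·Σ_{n=1}^{N} a_n·w_α(λ_n)·e^{iλ_n x}, where w_α(t) = (π/2)·max(0, 2α − |t − 2α|). -/

import Mathlib

open Real Filter Finset MeasureTheory

section ConvolutionAux
open Complex FourierTransform

lemma kernel_bound (a u : ℝ) : (Real.sin (a*u)/u)^2 ≤ (a^2+1) * (1+u^2)⁻¹ := by
  rcases eq_or_ne u 0 with h | h
  · simp [h]
    positivity
  · rw [div_pow, div_le_iff₀ (by positivity), mul_assoc, inv_mul_eq_div,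
      ← mul_div_assoc, le_div_iff₀ (by positivity)]
    have h1 : Real.sin (a*u) ^ 2 ≤ (a*u)^2 := Real.sin_sq_le_sq
    have h2 : Real.sin (a*u) ^ 2 ≤ 1 := Real.sin_sq_le_one _
    nlinarith [sq_nonneg u, sq_nonneg (a*u)]

lemma kernel_integrable (a : ℝ) : Integrable (fun u : ℝ => (Real.sin (a*u)/u)^2) := by
  refine (integrable_inv_one_add_sq.const_mul (a^2+1)).mono' ?_ (ae_of_all _ fun u => ?_)
  · exact (((Real.measurable_sin.comp (measurable_const_mul a)).div measurable_id).pow_const 2).aestronglyMeasurable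
  · rw [Real.norm_eq_abs, _root_.abs_of_nonneg (by positivity)]
    exact kernel_bound a u


noncomputable def tri (α : ℝ) : ℝ → ℂ := fun ξ => ((max 0 (2*α - |ξ|) : ℝ) : ℂ)

lemma tri_continuous (α : ℝ) : Continuous (tri α) :=
  Complex.continuous_ofReal.comp (continuous_const.max (continuous_const.sub continuous_abs))

lemma tri_zero_of (α : ℝ) {x : ℝ} (hx : 2*α ≤ |x|) : tri α x = 0 := by
  simp [tri, max_eq_left, sub_nonpos.mpr hx]

lemma tri_integrable (α : ℝ) : Integrable (tri α) := by
  apply (tri_continuous α).integrable_of_hasCompactSupport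
  apply HasCompactSupport.intro (isCompact_Icc (a := -(2*α)) (b := 2*α))
  intro x hx
  apply tri_zero_of
  simp only [Set.mem_Icc, not_and_or, not_le] at hx
  rcases hx with h | h
  · exact le_abs.mpr (Or.inr (by linarith))
  · exact le_abs.mpr (Or.inl h.le)

lemma aux_int (c : ℂ) (hc : c ≠ 0) (A ε : ℂ) (s t : ℝ) :
    ∫ v in s..t, (A + ε*v) * Complex.exp (c*v) =
      (Complex.exp (c*t) * ((A + ε*t)/c - ε/c^2)) -
        (Complex.exp (c*s) * ((A + ε*s)/c - ε/c^2)) := by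
  have hderiv : ∀ x : ℝ, HasDerivAt (fun v : ℝ => Complex.exp (c*v) * ((A + ε*v)/c - ε/c^2))
      ((A + ε*x) * Complex.exp (c*x)) x := by
    intro x
    have h0 : HasDerivAt (fun v : ℝ => (v : ℂ)) 1 x := by
      simpa using (hasDerivAt_id x).ofReal_comp
    have h1 : HasDerivAt (fun v : ℝ => Complex.exp (c*v)) (Complex.exp (c*x) * c) x := by
      simpa [mul_comm] using (h0.const_mul c).cexp
    have h2 : HasDerivAt (fun v : ℝ => ((A + ε*v)/c - ε/c^2)) (ε/c) x := by
      simpa using (((h0.const_mul ε).const_add A).div_const c).sub_const (ε/c^2)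
    have := h1.mul h2
    convert this using 1
    · rfl
    case e'_8 => rfl
    field_simp
    ring
  rw [intervalIntegral.integral_eq_sub_of_hasDerivAt (fun x _ => hderiv x)]
  apply Continuous.intervalIntegrable
  exact ((continuous_const.add (continuous_const.mul Complex.continuous_ofReal)).mul
    ((continuous_const.mul Complex.continuous_ofReal).cexp))

lemma fourier_tri (α : ℝ) (hα : 0 < α) (u : ℝ) (hu : u ≠ 0) :
    𝓕 (tri α) u = ((Real.sin (2*π*α*u)^2 / (π^2 * u^2) : ℝ) : ℂ) := by
  have hπ := Real.pi_ne_zero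
  obtain ⟨c, hc_def⟩ : ∃ c : ℂ, c = ((-2*π*u : ℝ) : ℂ) * Complex.I := ⟨_, rfl⟩
  have hc : c ≠ 0 := by
    rw [hc_def]
    apply mul_ne_zero _ Complex.I_ne_zero
    exact Complex.ofReal_ne_zero.mpr (mul_ne_zero (mul_ne_zero (by norm_num) hπ) hu)
  have hstep : 𝓕 (tri α) u = ∫ v : ℝ, Complex.exp (c * v) * tri α v := by
    rw [Real.fourier_real_eq_integral_exp_smul]
    congr 1; ext v
    rw [smul_eq_mul]
    congr 2
    push_cast [hc_def]; ring
  rw [hstep]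
  have hsupp : ∀ x : ℝ, x ∉ Set.Icc (-(2*α)) (2*α) → Complex.exp (c*x) * tri α x = 0 := by
    intro x hx
    rw [tri_zero_of, mul_zero]
    simp only [Set.mem_Icc, not_and_or, not_le] at hx
    rcases hx with h | h
    · exact le_abs.mpr (Or.inr (by linarith))
    · exact le_abs.mpr (Or.inl h.le)
  rw [← MeasureTheory.setIntegral_eq_integral_of_forall_compl_eq_zero hsupp,
    MeasureTheory.integral_Icc_eq_integral_Ioc,
    ← intervalIntegral.integral_of_le (by linarith : -(2*α) ≤ 2*α)]
  have hcont : Continuous fun v : ℝ => Complex.exp (c*v) * tri α v :=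
    ((continuous_const.mul Complex.continuous_ofReal).cexp).mul (tri_continuous α)
  rw [← intervalIntegral.integral_add_adjacent_intervals (b := 0)
    (hcont.intervalIntegrable _ _) (hcont.intervalIntegrable _ _)]
  have h1 : ∫ v in (-(2*α))..0, Complex.exp (c*v) * tri α v
      = ∫ v in (-(2*α))..0, ((2*α : ℝ) + 1*v) * Complex.exp (c*v) := by
    apply intervalIntegral.integral_congr
    intro v hv
    rw [Set.uIcc_of_le (by linarith)] at hv
    obtain ⟨h1', h2'⟩ := hv
    have hva : |v| = -v := abs_of_nonpos h2'
    rw [mul_comm]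
    congr 1
    simp only [tri, hva, max_eq_right (by linarith : (0:ℝ) ≤ 2*α - -v)]
    push_cast; ring
  have h2 : ∫ v in (0:ℝ)..(2*α), Complex.exp (c*v) * tri α v
      = ∫ v in (0:ℝ)..(2*α), ((2*α : ℝ) + (-1)*v) * Complex.exp (c*v) := by
    apply intervalIntegral.integral_congr
    intro v hv
    rw [Set.uIcc_of_le (by linarith)] at hv
    obtain ⟨h1', h2'⟩ := hv
    have hva : |v| = v := abs_of_nonneg h1'
    rw [mul_comm]
    congr 1
    simp only [tri, hva, max_eq_right (by linarith : (0:ℝ) ≤ 2*α - v)]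
    push_cast; ring
  rw [h1, h2, aux_int c hc _ _ _ _, aux_int c hc _ _ _ _]
  have hθ : Real.cos (4*π*α*u) = 1 - 2 * Real.sin (2*π*α*u)^2 := by
    have h4 : Real.cos (4*π*α*u) = Real.cos (2*(2*π*α*u)) := by congr 1; ring
    rw [h4, Real.cos_two_mul]
    nlinarith [Real.sin_sq_add_cos_sq (2*π*α*u)]
  have hexp1 : Complex.exp (c * ((2*α : ℝ) : ℂ)) + Complex.exp (c * ((-(2*α) : ℝ) : ℂ))
      = 2 * ((Real.cos (4*π*α*u) : ℝ) : ℂ) := by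
    rw [Complex.ofReal_cos, Complex.two_cos]
    rw [show c * ((2*α : ℝ) : ℂ) = -((4*π*α*u : ℝ) : ℂ) * Complex.I by push_cast [hc_def]; ring,
      show c * ((-(2*α) : ℝ) : ℂ) = ((4*π*α*u : ℝ) : ℂ) * Complex.I by push_cast [hc_def]; ring]
    ring
  have hc2 : c^2 = -(((4*π^2*u^2 : ℝ)) : ℂ) := by
    rw [hc_def]
    push_cast
    rw [mul_pow, Complex.I_sq]
    ring
  have hθc : ((Real.cos (4*π*α*u) : ℝ) : ℂ) = 1 - 2 * ((Real.sin (2*π*α*u) : ℝ) : ℂ)^2 := by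
    exact_mod_cast hθ
  trans ((Complex.exp (c * ((2*α : ℝ) : ℂ)) + Complex.exp (c * ((-(2*α) : ℝ) : ℂ)) - 2)/c^2)
  · field_simp [hc]
    push_cast
    simp only [mul_zero, Complex.exp_zero]
    ring
  · rw [hexp1, hθc, hc2]
    have hπc : (π : ℂ) ≠ 0 := Complex.ofReal_ne_zero.mpr hπ
    have huc : (u : ℂ) ≠ 0 := Complex.ofReal_ne_zero.mpr hu
    push_cast
    field_simp [hπc, huc]
    ring


lemma W_eq (α : ℝ) (hα : 0 < α) (t : ℝ) :
    ∫ u : ℝ, (((Real.sin (α*u)/u)^2 : ℝ) : ℂ) * Complex.exp (((t*u : ℝ) : ℂ) * Complex.I)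
      = ((π/2 * max 0 (2*α - |t|) : ℝ) : ℂ) := by
  have hπ := Real.pi_ne_zero
  have h2π : (2*π) ≠ 0 := by positivity
  have h0 : ∀ᵐ (u : ℝ), u ≠ 0 := by
    refine ae_iff.mpr ?_
    rw [show {a : ℝ | ¬ a ≠ 0} = {(0:ℝ)} by ext y; simp]
    exact Real.volume_singleton
  have hgR : Integrable (fun u : ℝ => Real.sin (2*π*α*u)^2/(π^2*u^2)) := by
    have h := (kernel_integrable (2*π*α)).const_mul ((π^2)⁻¹)
    refine h.congr (ae_of_all _ fun u => ?_)
    simp only []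
    rw [div_pow, div_eq_mul_inv, div_eq_mul_inv, mul_inv]
    ring
  have hg : Integrable (fun u : ℝ => ((Real.sin (2*π*α*u)^2/(π^2*u^2) : ℝ) : ℂ)) := hgR.ofReal
  have h_ae : 𝓕 (tri α) =ᵐ[volume] fun u : ℝ => ((Real.sin (2*π*α*u)^2/(π^2*u^2) : ℝ) : ℂ) :=
    h0.mono fun u hu => fourier_tri α hα u hu
  have hFT_int : Integrable (𝓕 (tri α)) := hg.congr h_ae.symm
  have hinv : 𝓕⁻ (𝓕 (tri α)) t = tri α t :=
    (tri_integrable α).fourierInv_fourier_eq hFT_int ((tri_continuous α).continuousAt)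
  rw [Real.fourierInv_eq_fourier_neg,
    Real.fourier_real_eq_integral_exp_smul] at hinv
  have step1 : ∫ v : ℝ, Complex.exp (((-2*π*v*(-t) : ℝ) : ℂ) * Complex.I) • 𝓕 (tri α) v
      = ∫ v : ℝ, Complex.exp (((-2*π*v*(-t) : ℝ) : ℂ) * Complex.I)
          * ((Real.sin (2*π*α*v)^2/(π^2*v^2) : ℝ) : ℂ) := by
    refine integral_congr_ae (h_ae.mono fun v hv => ?_)
    simp only [smul_eq_mul, hv]
  rw [step1] at hinv
  set G : ℝ → ℂ := fun v => Complex.exp (((-2*π*v*(-t) : ℝ) : ℂ) * Complex.I)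
          * ((Real.sin (2*π*α*v)^2/(π^2*v^2) : ℝ) : ℂ) with hG_def
  have hsub := MeasureTheory.Measure.integral_comp_inv_mul_left G (2*π)
  have hGpt : ∀ x : ℝ, G ((2*π)⁻¹ * x)
      = 4 * ((((Real.sin (α*x)/x)^2 : ℝ)) : ℂ) * Complex.exp (((t*x : ℝ) : ℂ) * Complex.I) := by
    intro x
    rw [hG_def]
    simp only
    have e1 : -2*π*((2*π)⁻¹*x)*(-t) = t*x := by field_simp
    have e2 : 2*π*α*((2*π)⁻¹*x) = α*x := by field_simp
    have e3 : Real.sin (α*x)^2/(π^2*((2*π)⁻¹*x)^2) = 4 * (Real.sin (α*x)/x)^2 := by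
      rw [show (π:ℝ)^2*((2*π)⁻¹*x)^2 = x^2/4 by field_simp; ring]
      rw [div_pow, div_div_eq_mul_div, mul_comm _ (4:ℝ), mul_div_assoc]
    rw [e1, e2, e3]
    push_cast
    ring
  rw [funext hGpt] at hsub
  -- hsub : ∫ x, 4 * K x * exp(t x I) = |2π| • ∫ v, G v
  rw [hinv, abs_of_pos (by positivity : (0:ℝ) < 2*π)] at hsub
  have h4 : ∫ x : ℝ, 4 * ((((Real.sin (α*x)/x)^2 : ℝ)) : ℂ) * Complex.exp (((t*x : ℝ) : ℂ) * Complex.I)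
      = 4 * ∫ x : ℝ, ((((Real.sin (α*x)/x)^2 : ℝ)) : ℂ) * Complex.exp (((t*x : ℝ) : ℂ) * Complex.I) := by
    rw [← integral_const_mul]
    congr 1; ext x; ring
  rw [h4] at hsub
  rw [show tri α t = ((max 0 (2*α - |t|) : ℝ) : ℂ) from rfl] at hsub
  have : (4:ℂ) ≠ 0 := by norm_num
  rw [Complex.real_smul] at hsub
  push_cast at hsub ⊢
  linear_combination hsub / 4


lemma KI (α t : ℝ) : Integrable (fun u : ℝ =>
    (((Real.sin (α*u)/u)^2 : ℝ) : ℂ) * Complex.exp (((t*u:ℝ):ℂ) * Complex.I)) := by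
  refine Integrable.mono' (g := fun u : ℝ => (Real.sin (α*u)/u)^2) (kernel_integrable α)
    ?_ (ae_of_all _ fun u => ?_)
  · exact (Integrable.ofReal (𝕜 := ℂ) (kernel_integrable α)).aestronglyMeasurable.mul
      (Complex.continuous_exp.comp
        (((Complex.continuous_ofReal.comp (continuous_const.mul continuous_id)).mul
          continuous_const))).aestronglyMeasurable
  · rw [norm_mul, Complex.norm_exp_ofReal_mul_I, mul_one,
      Complex.norm_real, Real.norm_eq_abs]
    exact le_of_eq (_root_.abs_of_nonneg (by positivity))

lemma term_eval (α : ℝ) (hα : 0 < α) (lam : ℝ) (hlam : 0 < lam) (x β A : ℝ) :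
    ∫ u : ℝ, ((A * Real.cos (lam*(x+u)+β) : ℝ) : ℂ) * (((Real.sin (α*u)/u)^2 : ℝ) : ℂ)
        * Complex.exp (-(2*α*u : ℝ) * Complex.I)
      = (1/2) * Complex.exp ((β:ℂ) * Complex.I) * ((A:ℂ)
          * ((π/2 * max 0 (2*α - |lam - 2*α|) : ℝ) : ℂ)
          * Complex.exp (((lam*x : ℝ):ℂ) * Complex.I)) := by
  have hpt : ∀ u : ℝ, ((A * Real.cos (lam*(x+u)+β) : ℝ) : ℂ) * (((Real.sin (α*u)/u)^2 : ℝ) : ℂ)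
        * Complex.exp (-(2*α*u : ℝ) * Complex.I)
      = ((A:ℂ)/2 * Complex.exp (((lam*x+β : ℝ):ℂ) * Complex.I))
          * ((((Real.sin (α*u)/u)^2 : ℝ) : ℂ)
            * Complex.exp ((((lam-2*α)*u : ℝ):ℂ) * Complex.I))
        + ((A:ℂ)/2 * Complex.exp (-((lam*x+β : ℝ):ℂ) * Complex.I))
          * ((((Real.sin (α*u)/u)^2 : ℝ) : ℂ)
            * Complex.exp (((-(lam+2*α)*u : ℝ):ℂ) * Complex.I)) := by
    intro u
    have hcos : ((Real.cos (lam*(x+u)+β) : ℝ) : ℂ)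
        = (Complex.exp (((lam*(x+u)+β : ℝ):ℂ)*Complex.I)
            + Complex.exp (-((lam*(x+u)+β : ℝ):ℂ)*Complex.I))/2 := by
      rw [Complex.ofReal_cos]
      linear_combination (Complex.two_cos (((lam*(x+u)+β : ℝ):ℂ)))/2
    have c1 : Complex.exp (((lam*x+β : ℝ):ℂ)*Complex.I)
          * Complex.exp ((((lam-2*α)*u : ℝ):ℂ)*Complex.I)
        = Complex.exp (((lam*(x+u)+β : ℝ):ℂ)*Complex.I)
          * Complex.exp (-(2*α*u : ℝ) * Complex.I) := by
      rw [← Complex.exp_add, ← Complex.exp_add]; congr 1; push_cast; ring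
    have c2 : Complex.exp (-((lam*x+β : ℝ):ℂ)*Complex.I)
          * Complex.exp (((-(lam+2*α)*u : ℝ):ℂ)*Complex.I)
        = Complex.exp (-((lam*(x+u)+β : ℝ):ℂ)*Complex.I)
          * Complex.exp (-(2*α*u : ℝ) * Complex.I) := by
      rw [← Complex.exp_add, ← Complex.exp_add]; congr 1; push_cast; ring
    rw [Complex.ofReal_mul, hcos]
    linear_combination (-(A:ℂ) * (((Real.sin (α*u)/u)^2 : ℝ) : ℂ)/2) * c1
      + (-(A:ℂ) * (((Real.sin (α*u)/u)^2 : ℝ) : ℂ)/2) * c2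
  rw [integral_congr_ae (ae_of_all _ hpt), integral_add ((KI α (lam-2*α)).const_mul _)
    ((KI α (-(lam+2*α))).const_mul _), integral_const_mul, integral_const_mul,
    W_eq α hα (lam-2*α), W_eq α hα (-(lam+2*α))]
  have hz : π/2 * max 0 (2*α - |(-(lam+2*α))|) = 0 := by
    rw [abs_of_neg (by linarith), max_eq_left (by linarith)]
    ring
  rw [hz]
  have c3 : Complex.exp (((lam*x+β : ℝ):ℂ)*Complex.I)
      = Complex.exp ((β:ℂ)*Complex.I) * Complex.exp (((lam*x : ℝ):ℂ)*Complex.I) := by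
    rw [← Complex.exp_add]; congr 1; push_cast; ring
  rw [c3]
  push_cast
  ring

end ConvolutionAux

theorem convolution_formula (α β : ℝ) (hα : 0 < α) (N : ℕ) (hN : 0 < N)
    (lam a : ℕ → ℝ) (hlam : ∀ n ∈ Finset.Icc 1 N, 0 < lam n) (x : ℝ) :
    (∫ u : ℝ,
        (((∑ n ∈ Finset.Icc 1 N, a n * Real.cos (lam n * (x + u) + β)) : ℝ) : ℂ)
          * (((Real.sin (α * u) / u) ^ 2 : ℝ) : ℂ)
          * Complex.exp (-(2 * α * u : ℝ) * Complex.I))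
      = (1 / 2) * Complex.exp ((β : ℂ) * Complex.I) *
          ∑ n ∈ Finset.Icc 1 N, (a n : ℂ)
            * ((Real.pi / 2 * max 0 (2 * α - |lam n - 2 * α|) : ℝ) : ℂ)
            * Complex.exp ((lam n * x : ℝ) * Complex.I) := by
  have hterm : ∀ u : ℝ,
      (((∑ n ∈ Finset.Icc 1 N, a n * Real.cos (lam n * (x + u) + β)) : ℝ) : ℂ)
          * (((Real.sin (α * u) / u) ^ 2 : ℝ) : ℂ)
          * Complex.exp (-(2 * α * u : ℝ) * Complex.I)
      = ∑ n ∈ Finset.Icc 1 N, ((a n * Real.cos (lam n * (x + u) + β) : ℝ) : ℂ)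
          * (((Real.sin (α * u) / u) ^ 2 : ℝ) : ℂ)
          * Complex.exp (-(2 * α * u : ℝ) * Complex.I) := by
    intro u
    rw [Complex.ofReal_sum, Finset.sum_mul, Finset.sum_mul]
  rw [integral_congr_ae (ae_of_all _ hterm)]
  rw [MeasureTheory.integral_finset_sum]
  · rw [Finset.sum_congr rfl (fun n hn =>
      term_eval α hα (lam n) (hlam n hn) x β (a n)), ← Finset.mul_sum]
  · intro n hn
    refine Integrable.mono' (g := fun u => |a n| * (Real.sin (α*u)/u)^2)
      ((kernel_integrable α).const_mul _) ?_ (ae_of_all _ fun u => ?_)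
    · have m1 : AEStronglyMeasurable
          (fun u : ℝ => ((a n * Real.cos (lam n * (x+u)+β) : ℝ) : ℂ)) volume :=
        Continuous.aestronglyMeasurable (by fun_prop)
      have m2 := (Integrable.ofReal (𝕜 := ℂ) (kernel_integrable α)).aestronglyMeasurable
      have m3 : AEStronglyMeasurable
          (fun u : ℝ => Complex.exp (-(2*α*u : ℝ) * Complex.I)) volume :=
        Continuous.aestronglyMeasurable (by fun_prop)
      exact (m1.mul m2).mul m3
    · have he : ‖Complex.exp (-(2*α*u : ℝ) * Complex.I)‖ = 1 := by
        rw [show -((2*α*u : ℝ):ℂ) * Complex.I = ((-(2*α*u) : ℝ):ℂ) * Complex.I by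
          push_cast; ring]
        exact Complex.norm_exp_ofReal_mul_I _
      rw [norm_mul, norm_mul, he, mul_one, Complex.norm_real, Complex.norm_real,
        Real.norm_eq_abs, Real.norm_eq_abs, abs_mul,
        _root_.abs_of_nonneg (by positivity : (0:ℝ) ≤ (Real.sin (α*u)/u)^2)]
      have := Real.abs_cos_le_one (lam n * (x+u)+β)
      have hk : (0:ℝ) ≤ (Real.sin (α*u)/u)^2 := by positivity
      nlinarith [abs_nonneg (a n), mul_nonneg (abs_nonneg (a n)) hk]
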